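/- Let x_1, ..., x_k be positive integers with k ≥ 3 and g = gcd(x_1,...,x_k). Then the set of integers expressible as Σ_{j=1}^J x_{i_j} with i_j ≠ i_{j+1} for all j contains all sufficiently large multiples of g. In particular, the numerical-semigroup-like set generated by such no-consecutive-repeat sums has finite complement in g·ℕ. -/

import Mathlib

/-- Given a list of pairs with distinct components, we can build a chain
(no two consecutive equal) whose sum of `x`-values equals the sum over the pairs,
and whose head avoids a prescribed element `e`. -/
lemma chain_of_pairs {k : ℕ} (x : Fin k → ℕ) :
    ∀ (ps : List (Fin k × Fin k)) (e : Fin k), (∀ p ∈ ps, p.1 ≠ p.2) →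
    ∃ l : List (Fin k), l.Chain' (· ≠ ·) ∧ (∀ h ∈ l.head?, h ≠ e) ∧
      (l.map x).sum = (ps.map (fun p => x p.1 + x p.2)).sum := by
  intro ps
  induction ps with
  | nil => exact fun e _ => ⟨[], List.isChain_nil, by simp, by simp⟩
  | cons p ps ih =>
    intro e hps
    have hp : p.1 ≠ p.2 := hps p List.mem_cons_self
    obtain ⟨c, d, hcd, hce, hsum⟩ :
        ∃ c d : Fin k, c ≠ d ∧ c ≠ e ∧ x c + x d = x p.1 + x p.2 := by
      by_cases h : p.1 = e
      · exact ⟨p.2, p.1, hp.symm, fun h2 => hp (h2.trans h.symm).symm, by ring⟩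
      · exact ⟨p.1, p.2, hp, h, rfl⟩
    obtain ⟨l, hl, hh, hs⟩ := ih d (fun q hq => hps q (List.mem_cons_of_mem _ hq))
    refine ⟨c :: d :: l, ?_, ?_, ?_⟩
    · rw [List.Chain', List.isChain_cons_cons]
      exact ⟨hcd, List.isChain_cons.mpr ⟨fun y hy => (hh y hy).symm, hl⟩⟩
    · simp [hce]
    · simp only [List.map_cons, List.sum_cons, ← add_assoc, hsum, hs]

/-- Chicken McNugget for lists: all sufficiently large multiples of the gcd
of a finite family of positive naturals are sums of a list of elements. -/
lemma exists_t (a g C : ℕ) (hg : 0 < g) (h : Nat.gcd a g ∣ C) :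
    ∃ t : ℕ, t < g ∧ (g : ℤ) ∣ (C : ℤ) - t * a := by
  have hg0 : (0 : ℤ) < g := by exact_mod_cast hg
  have hd : ((Nat.gcd a g : ℕ) : ℤ) = a * Nat.gcdA a g + g * Nat.gcdB a g :=
    Nat.gcd_eq_gcd_ab a g
  obtain ⟨q, hq⟩ := h
  set T : ℤ := (q : ℤ) * Nat.gcdA a g with hT
  have h1 : T % g < g := Int.emod_lt_of_pos T hg0
  have h2 : 0 ≤ T % g := Int.emod_nonneg T (by omega)
  refine ⟨(T % g).toNat, by omega, ?_⟩
  have ht : ((T % g).toNat : ℤ) = T % g := Int.toNat_of_nonneg h2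
  have h3 : (g : ℤ) ∣ (C : ℤ) - T * a := by
    have hC : (C : ℤ) = (Nat.gcd a g : ℕ) * q := by exact_mod_cast hq
    refine ⟨q * Nat.gcdB a g, ?_⟩
    rw [hC, hd]; ring
  have h4 : (g : ℤ) ∣ (T - T % g) := ⟨T / g, by rw [Int.emod_def]; ring⟩
  have key : (C : ℤ) - ((T % g).toNat : ℤ) * a
      = ((C : ℤ) - T * a) + (T - T % g) * a := by rw [ht]; ring
  rw [key]
  exact dvd_add h3 (h4.mul_right a)

lemma semigroup_list {ι : Type*} [DecidableEq ι] (s : Finset ι) (y : ι → ℕ)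
    (hy : ∀ i ∈ s, 0 < y i) :
    ∃ N : ℕ, ∀ C : ℕ, s.gcd y ∣ C → N ≤ C →
      ∃ l : List ι, (∀ p ∈ l, p ∈ s) ∧ (l.map y).sum = C := by
  induction s using Finset.induction with
  | empty =>
    refine ⟨1, fun C hC hN => ?_⟩
    rw [Finset.gcd_empty, zero_dvd_iff] at hC
    omega
  | @insert a s ha ih =>
    have hya : 0 < y a := hy a (Finset.mem_insert_self a s)
    by_cases hs : s.gcd y = 0
    · refine ⟨0, fun C hC _ => ?_⟩
      rw [Finset.gcd_insert, hs] at hC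
      have hC' : y a ∣ C := by simpa using hC
      obtain ⟨t, ht⟩ := hC'
      refine ⟨List.replicate t a, fun p hp => ?_, ?_⟩
      · rw [List.eq_of_mem_replicate hp]; exact Finset.mem_insert_self a s
      · simp [List.map_replicate, List.sum_replicate, ht, mul_comm]
    · have hg' : 0 < s.gcd y := Nat.pos_of_ne_zero hs
      obtain ⟨N', hN'⟩ := ih (fun i hi => hy i (Finset.mem_insert_of_mem hi))
      refine ⟨N' + s.gcd y * y a, fun C hC hN => ?_⟩
      rw [Finset.gcd_insert] at hC
      have hC' : Nat.gcd (y a) (s.gcd y) ∣ C := hC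
      obtain ⟨t, ht, hdvd⟩ := exists_t (y a) (s.gcd y) C hg' hC'
      have htya : t * y a + y a ≤ s.gcd y * y a := by
        calc t * y a + y a = (t + 1) * y a := by ring
        _ ≤ s.gcd y * y a := Nat.mul_le_mul_right _ (by omega)
      have hle : t * y a ≤ C := by omega
      have hgdvd : s.gcd y ∣ C - t * y a := by
        have : ((s.gcd y : ℕ) : ℤ) ∣ ((C - t * y a : ℕ) : ℤ) := by
          rw [Nat.cast_sub hle]; push_cast; exact hdvd
        exact_mod_cast this
      obtain ⟨l, hl, hls⟩ := hN' (C - t * y a) hgdvd (by omega)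
      refine ⟨List.replicate t a ++ l, fun p hp => ?_, ?_⟩
      · rcases List.mem_append.mp hp with h | h
        · rw [List.eq_of_mem_replicate h]; exact Finset.mem_insert_self a s
        · exact Finset.mem_insert_of_mem (hl p h)
      · rw [List.map_append, List.sum_append, List.map_replicate, List.sum_replicate,
          hls, smul_eq_mul]
        omega

/-- the set of admissible (no-consecutive-repeat) sums of the `x i`
contains all sufficiently large multiples of `g = gcd(x_1, ..., x_k)`. -/
theorem stmt10 (k : ℕ) (hk : 3 ≤ k) (x : Fin k → ℕ) (hx : ∀ i, 0 < x i) :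
    ∃ N : ℕ, ∀ C : ℕ, Finset.univ.gcd x ∣ C → N ≤ C →
      ∃ l : List (Fin k), l.Chain' (· ≠ ·) ∧ (l.map x).sum = C := by
  set g := Finset.univ.gcd x with hg
  have i0 : Fin k := ⟨0, by omega⟩
  have hgpos : 0 < g :=
    Nat.pos_of_dvd_of_pos (Finset.gcd_dvd (Finset.mem_univ i0)) (hx i0)
  set s : Finset (Fin k × Fin k) := Finset.univ.filter (fun p => p.1 ≠ p.2) with hsdef
  set y : Fin k × Fin k → ℕ := fun p => x p.1 + x p.2 with hy
  obtain ⟨N0, hN0⟩ := semigroup_list s y (fun p _ => Nat.add_pos_left (hx p.1) _)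
  set d := s.gcd y with hd
  have hmem : ∀ i j : Fin k, i ≠ j → (i, j) ∈ s := by
    intro i j hij
    simp [hsdef, hij]
  have hgd : g ∣ d := Finset.dvd_gcd fun p _ =>
    dvd_add (Finset.gcd_dvd (Finset.mem_univ _)) (Finset.gcd_dvd (Finset.mem_univ _))
  have hd2 : ∀ i, d ∣ 2 * x i := by
    intro i
    have hcard : 1 < (Finset.univ.erase i).card := by
      rw [Finset.card_erase_of_mem (Finset.mem_univ i), Finset.card_univ, Fintype.card_fin]
      omega
    obtain ⟨j, hj, l, hl, hjl⟩ := Finset.one_lt_card.mp hcard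
    have hji : j ≠ i := Finset.ne_of_mem_erase hj
    have hli : l ≠ i := Finset.ne_of_mem_erase hl
    have h1 : d ∣ x i + x j := Finset.gcd_dvd (hmem i j hji.symm)
    have h2 : d ∣ x i + x l := Finset.gcd_dvd (hmem i l hli.symm)
    have h3 : d ∣ x j + x l := Finset.gcd_dvd (hmem j l hjl)
    have h4 : d ∣ (x i + x j) + (x i + x l) := dvd_add h1 h2
    have := Nat.dvd_sub h4 h3
    have heq : (x i + x j) + (x i + x l) - (x j + x l) = 2 * x i := by omega
    rwa [heq] at this
  have hd2g : d ∣ 2 * g := by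
    have h1 : d ∣ Finset.univ.gcd (fun i => 2 * x i) := Finset.dvd_gcd fun i _ => hd2 i
    have h2 : Finset.univ.gcd (fun i => 2 * x i) = 2 * g := by
      rw [hg, Finset.gcd_mul_left]; norm_num
    rwa [h2] at h1
  refine ⟨N0 + 2 * g * (∑ i, x i) + (∑ i, x i) + 1, fun C hC hN => ?_⟩
  have hsumle : ∀ i : Fin k, x i ≤ ∑ j, x j :=
    fun i => Finset.single_le_sum (fun j _ => Nat.zero_le _) (Finset.mem_univ i)
  by_cases hdc : d ∣ C
  · obtain ⟨l, hl, hls⟩ := hN0 C hdc (by omega)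
    have hlp : ∀ p ∈ l, p.1 ≠ p.2 := fun p hp => by
      have := hl p hp
      rw [hsdef, Finset.mem_filter] at this
      exact this.2
    obtain ⟨L, hL, _, hLs⟩ := chain_of_pairs x l i0 hlp
    exact ⟨L, hL, by rw [hLs]; exact hls⟩
  · -- here d = 2 * g and C / g is odd
    have hdval : d = 2 * g := by
      obtain ⟨m, hm⟩ := hgd
      have hmd : m ∣ 2 := by
        have : g * m ∣ g * 2 := by rw [← hm, mul_comm g 2]; exact hd2g
        exact (mul_dvd_mul_iff_left (by omega : g ≠ 0)).mp this
      rcases (Nat.dvd_prime Nat.prime_two).mp hmd with h | h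
      · exfalso; apply hdc; rw [hm, h, mul_one]; exact hC
      · rw [hm, h, mul_comm]
    have hi : ∃ i, ¬ (2 * g ∣ x i) := by
      by_contra h
      push_neg at h
      have : 2 * g ∣ g := Finset.dvd_gcd fun i _ => h i
      have := Nat.le_of_dvd hgpos this
      omega
    obtain ⟨i, hi⟩ := hi
    have hxle : x i ≤ C := le_trans (hsumle i) (by omega)
    obtain ⟨ca, hca⟩ := hC
    obtain ⟨cb, hcb⟩ : g ∣ x i := Finset.gcd_dvd (Finset.mem_univ i)
    have h2ca : ¬ 2 ∣ ca := by
      rintro ⟨u, hu⟩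
      exact hdc (by rw [hdval, hca, hu]; exact ⟨u, by ring⟩)
    have h2cb : ¬ 2 ∣ cb := by
      rintro ⟨u, hu⟩
      exact hi ⟨u, by rw [hcb, hu]; ring⟩
    have hcbca : cb ≤ ca :=
      Nat.le_of_mul_le_mul_left (by omega : g * cb ≤ g * ca) hgpos
    obtain ⟨u, hu⟩ : 2 ∣ ca - cb := by omega
    have hCxi : C = x i + 2 * g * u := by
      have hca' : ca = cb + 2 * u := by omega
      rw [hca, hcb, hca']; ring
    have hdvd2 : d ∣ C - x i := by
      rw [hdval]
      exact ⟨u, by omega⟩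
    have hN2 : N0 ≤ C - x i := by
      have := hsumle i
      omega
    obtain ⟨l, hl, hls⟩ := hN0 (C - x i) hdvd2 hN2
    have hlp : ∀ p ∈ l, p.1 ≠ p.2 := fun p hp => by
      have := hl p hp
      rw [hsdef, Finset.mem_filter] at this
      exact this.2
    obtain ⟨L, hL, hhead, hLs⟩ := chain_of_pairs x l i hlp
    refine ⟨i :: L, ?_, ?_⟩
    · exact List.isChain_cons.mpr ⟨fun h hh => (hhead h hh).symm, hL⟩
    · rw [List.map_cons, List.sum_cons, hLs, hls]
      omega
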